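/- Let d ∈ ℝ^n with d_i ≥ 0 for all i, and let Γ ≥ 0. Then the minimum of (π, ρ) ↦ Γπ + Σ_{i∈[n]} ρ_i over all π ≥ 0 and ρ ∈ ℝ^n with ρ_i ≥ 0 and π + ρ_i ≥ d_i for all i is attained at some π belonging to the finite set {0} ∪ {d_1, …, d_n} (with ρ_i = max(d_i − π, 0)). (Hence the robust problem with budgeted uncertainty is polynomially solvable by enumerating these n+1 candidate values of π.) -/

import Mathlib

/-- The dual LP of the budgeted-uncertainty inner problem attains its minimum
at some `π ∈ {0} ∪ {d_1, …, d_n}` with `ρ_i = max (d_i − π) 0`. -/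
theorem stmt5 (n : ℕ) (d : Fin n → ℝ) (hd : ∀ i, 0 ≤ d i) (Γ : ℝ) (hΓ : 0 ≤ Γ) :
    ∃ π : ℝ, (π = 0 ∨ ∃ i, π = d i) ∧
      IsLeast ((fun p : ℝ × (Fin n → ℝ) => Γ * p.1 + ∑ i, p.2 i) ''
        {p : ℝ × (Fin n → ℝ) | 0 ≤ p.1 ∧ (∀ i, 0 ≤ p.2 i) ∧ ∀ i, d i ≤ p.1 + p.2 i})
        (Γ * π + ∑ i, max (d i - π) 0) := by
  set f : ℝ → ℝ := fun t => Γ * t + ∑ i, max (d i - t) 0 with hf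
  set C : Finset ℝ := insert 0 (Finset.image d Finset.univ) with hC
  have hCne : C.Nonempty := ⟨0, Finset.mem_insert_self _ _⟩
  obtain ⟨π₀, hπ₀C, hπ₀min⟩ := C.exists_min_image f hCne
  have hcand : π₀ = 0 ∨ ∃ i, π₀ = d i := by
    rcases Finset.mem_insert.mp hπ₀C with h | h
    · exact Or.inl h
    · obtain ⟨i, _, hi⟩ := Finset.mem_image.mp h
      exact Or.inr ⟨i, hi.symm⟩
  have hπ₀0 : 0 ≤ π₀ := by rcases hcand with h | ⟨i, h⟩ <;> simp [h, hd]
  have key : ∀ π : ℝ, 0 ≤ π → f π₀ ≤ f π := by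
    intro π hπ
    set S : Finset (Fin n) := Finset.univ.filter (fun i => π < d i) with hS
    have fform : ∀ t : ℝ, (∀ i ∈ S, t ≤ d i) → (∀ i, i ∉ S → d i ≤ t) →
        f t = (Γ - S.card) * t + ∑ i ∈ S, d i := by
      intro t h1 h2
      have hsum : (∑ i, max (d i - t) 0) = ∑ i ∈ S, (d i - t) := by
        rw [← Finset.sum_subset (Finset.subset_univ S)
          (fun i _ hi => by simp [max_eq_right, sub_nonpos.mpr (h2 i hi)])]
        exact Finset.sum_congr rfl fun i hi => max_eq_left (sub_nonneg.mpr (h1 i hi))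
      rw [hf]
      simp only [hsum, Finset.sum_sub_distrib, Finset.sum_const, nsmul_eq_mul]
      ring
    have hSπ : ∀ i ∈ S, π ≤ d i := fun i hi => le_of_lt (Finset.mem_filter.mp hi).2
    have hScπ : ∀ i, i ∉ S → d i ≤ π := by
      intro i hi
      by_contra h
      exact hi (Finset.mem_filter.mpr ⟨Finset.mem_univ i, lt_of_not_ge h⟩)
    have hfπ : f π = (Γ - S.card) * π + ∑ i ∈ S, d i := fform π hSπ hScπ
    rcases le_or_gt (S.card : ℝ) Γ with hcase | hcase
    · set D : Finset ℝ := C.filter (fun x => x ≤ π) with hD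
      have hDne : D.Nonempty := ⟨0, Finset.mem_filter.mpr ⟨Finset.mem_insert_self _ _, hπ⟩⟩
      obtain ⟨c, hcD, hcmax⟩ := D.exists_max_image id hDne
      have hcC : c ∈ C := (Finset.mem_filter.mp hcD).1
      have hcπ : c ≤ π := (Finset.mem_filter.mp hcD).2
      have hSc : ∀ i ∈ S, c ≤ d i := fun i hi => le_trans hcπ (hSπ i hi)
      have hScc : ∀ i, i ∉ S → d i ≤ c := by
        intro i hi
        have h1 : d i ≤ π := hScπ i hi
        have h2 : d i ∈ D := Finset.mem_filter.mpr
          ⟨Finset.mem_insert_of_mem (Finset.mem_image_of_mem d (Finset.mem_univ i)), h1⟩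
        exact hcmax _ h2
      have hfc : f c = (Γ - S.card) * c + ∑ i ∈ S, d i := fform c hSc hScc
      have hle : f c ≤ f π := by
        rw [hfc, hfπ]
        have : (Γ - S.card) * c ≤ (Γ - S.card) * π :=
          mul_le_mul_of_nonneg_left hcπ (by linarith)
        linarith
      exact le_trans (hπ₀min c hcC) hle
    · have hSne : S.Nonempty := by
        by_contra h
        rw [Finset.not_nonempty_iff_eq_empty] at h
        rw [h] at hcase; simp at hcase; linarith
      obtain ⟨j, hjS, hjmin⟩ := S.exists_min_image d hSne
      have hcC : d j ∈ C :=
        Finset.mem_insert_of_mem (Finset.mem_image_of_mem d (Finset.mem_univ j))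
      have hπc : π < d j := (Finset.mem_filter.mp hjS).2
      have hSc : ∀ i ∈ S, d j ≤ d i := fun i hi => hjmin i hi
      have hScc : ∀ i, i ∉ S → d i ≤ d j := fun i hi =>
        le_of_lt (lt_of_le_of_lt (hScπ i hi) hπc)
      have hfc : f (d j) = (Γ - S.card) * (d j) + ∑ i ∈ S, d i := fform (d j) hSc hScc
      have hle : f (d j) ≤ f π := by
        rw [hfc, hfπ]
        nlinarith
      exact le_trans (hπ₀min _ hcC) hle
  refine ⟨π₀, hcand, ⟨⟨(π₀, fun i => max (d i - π₀) 0), ⟨hπ₀0, fun i => le_max_right _ _,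
    fun i => by have := le_max_left (d i - π₀) 0; linarith⟩, rfl⟩, ?_⟩⟩
  rintro x ⟨⟨p₁, p₂⟩, ⟨hp1, hp2, hp3⟩, rfl⟩
  have h1 : f p₁ ≤ Γ * p₁ + ∑ i, p₂ i := by
    apply add_le_add_right
    apply Finset.sum_le_sum
    intro i _
    exact max_le (by linarith [hp3 i]) (hp2 i)
  exact le_trans (key p₁ hp1) h1
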